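/- Let μ be a Borel probability measure on the unit circle such that ∫ z² dμ(z) = 1. Then there exists t ∈ [0, 1] with μ = t·δ₁ + (1 − t)·δ₋₁, where δ₁ and δ₋₁ denote the Dirac measures at the points 1 and −1 of the circle; in particular ∫ z dμ(z) = 2t − 1 is a real number lying in the interval [−1, 1]. -/

import Mathlib

open MeasureTheory

noncomputable instance : MeasurableSpace Circle := borel Circle
instance : BorelSpace Circle := ⟨rfl⟩

/-- The point `-1` of the unit circle. -/
noncomputable def negOneCircle : Circle :=
  ⟨-1, by simp [Submonoid.unitSphere, Metric.mem_sphere]⟩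

lemma circle_coe_continuous : Continuous (fun z : Circle => (z : ℂ)) :=
  continuous_subtype_val

theorem measure_with_second_moment_one {μ : Measure Circle} [IsProbabilityMeasure μ]
    (h : ∫ z, (z : ℂ) ^ 2 ∂μ = 1) :
    ∃ t ∈ Set.Icc (0 : ℝ) 1,
      μ = ENNReal.ofReal t • Measure.dirac (1 : Circle) +
          ENNReal.ofReal (1 - t) • Measure.dirac negOneCircle ∧
      ∫ z, (z : ℂ) ∂μ = 2 * t - 1 := by
  have hint : Integrable (fun z : Circle => (z : ℂ) ^ 2) μ :=
    (circle_coe_continuous.pow 2).integrable_of_hasCompactSupport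
      (HasCompactSupport.of_compactSpace _)
  -- Re part
  have hre : ∫ z, (1 - ((z : ℂ) ^ 2).re) ∂μ = 0 := by
    simp only [← RCLike.re_eq_complex_re]
    rw [integral_sub (integrable_const 1) hint.re]
    simp only [integral_const, measure_univ, ENNReal.toReal_one, one_smul]
    rw [integral_re hint, h]
    simp
  have hnonneg : ∀ z : Circle, 0 ≤ 1 - ((z : ℂ) ^ 2).re := by
    intro z
    have h1 : ((z : ℂ) ^ 2).re ≤ ‖(z : ℂ) ^ 2‖ := Complex.re_le_norm _
    have h2 : ‖(z : ℂ) ^ 2‖ = 1 := by simp [map_pow, Circle.norm_coe]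
    linarith
  have hintsub : Integrable (fun z : Circle => 1 - ((z : ℂ) ^ 2).re) μ := by
    have : Integrable (fun z : Circle => ((z : ℂ) ^ 2).re) μ := by
      simpa only [RCLike.re_eq_complex_re] using hint.re
    exact (integrable_const 1).sub this
  have hae : ∀ᵐ (z : Circle) ∂μ, (1 : ℝ) - ((z : ℂ) ^ 2).re = 0 := by
    have := (integral_eq_zero_iff_of_nonneg (fun z => hnonneg z) hintsub).mp hre
    filter_upwards [this] with z hz using hz
  -- hence z = 1 or z = -1 a.e.
  have hae2 : ∀ᵐ (z : Circle) ∂μ, z = 1 ∨ z = negOneCircle := by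
    filter_upwards [hae] with z hz
    have hre1 : ((z : ℂ) ^ 2).re = 1 := by linarith
    have habs : ‖(z : ℂ) ^ 2‖ = 1 := by simp [map_pow, Circle.norm_coe]
    have him : ((z : ℂ) ^ 2).im = 0 := by
      have := Complex.sq_norm ((z : ℂ) ^ 2)
      rw [habs, Complex.normSq_apply, hre1] at this
      nlinarith
    have hz2 : (z : ℂ) ^ 2 = 1 := by
      apply Complex.ext <;> simp [hre1, him]
    have : ((z : ℂ) - 1) * ((z : ℂ) + 1) = 0 := by ring_nf; linear_combination hz2
    rcases mul_eq_zero.mp this with h1 | h1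
    · left; exact Subtype.ext (show (z : ℂ) = ((1 : Circle) : ℂ) by rw [Circle.coe_one]; linear_combination h1)
    · right; exact Subtype.ext (show (z : ℂ) = -1 by linear_combination h1)
  have hne : (1 : Circle) ≠ negOneCircle := by
    intro hc
    have : (1 : ℂ) = -1 := congrArg Subtype.val hc
    norm_num at this
  have hms1 : MeasurableSet ({1} : Set Circle) := measurableSet_singleton _
  have hmsn : MeasurableSet ({negOneCircle} : Set Circle) := measurableSet_singleton _
  have hcompl : μ ({1, negOneCircle} : Set Circle)ᶜ = 0 := by
    have hmem : ∀ᵐ z ∂μ, z ∈ ({1, negOneCircle} : Set Circle) :=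
      hae2.mono (fun z hz => by simpa using hz)
    rw [ae_iff] at hmem
    rw [Set.compl_def]
    exact hmem
  have hsum : μ {1} + μ {negOneCircle} = 1 := by
    have hu : μ ({1, negOneCircle} : Set Circle) = 1 := by
      have h1 := measure_add_measure_compl (μ := μ) (hms1.union hmsn)
      rw [Set.singleton_union, hcompl, add_zero, measure_univ] at h1
      exact h1
    rw [← hu]
    exact (measure_union (by simpa using hne) hmsn).symm
  set t : ℝ := (μ {1}).toReal with ht
  have hfin1 : μ {1} ≠ ⊤ := measure_ne_top μ _
  have hfinn : μ {negOneCircle} ≠ ⊤ := measure_ne_top μ _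
  have hofReal1 : ENNReal.ofReal t = μ {1} := ENNReal.ofReal_toReal hfin1
  have hofRealn : ENNReal.ofReal (1 - t) = μ {negOneCircle} := by
    have : (1 : ℝ) - t = (μ {negOneCircle}).toReal := by
      have := congrArg ENNReal.toReal hsum
      rw [ENNReal.toReal_add hfin1 hfinn] at this
      simp only [ENNReal.toReal_one] at this
      linarith [this]
    rw [this]
    exact ENNReal.ofReal_toReal hfinn
  have ht0 : 0 ≤ t := ENNReal.toReal_nonneg
  have ht1 : t ≤ 1 := by
    have : μ {1} ≤ 1 := prob_le_one
    calc t = (μ {1}).toReal := ht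
    _ ≤ (1 : ENNReal).toReal := ENNReal.toReal_mono ENNReal.one_ne_top this
    _ = 1 := by simp
  have hμeq : μ = ENNReal.ofReal t • Measure.dirac (1 : Circle) +
      ENNReal.ofReal (1 - t) • Measure.dirac negOneCircle := by
    ext s hs
    rw [Measure.add_apply, Measure.smul_apply, Measure.smul_apply,
      Measure.dirac_apply' _ hs, Measure.dirac_apply' _ hs, hofReal1, hofRealn]
    have hdecomp : μ s = μ (s ∩ {1}) + μ (s ∩ {negOneCircle}) := by
      have h0 : μ (s \ ({1, negOneCircle} : Set Circle)) = 0 :=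
        measure_mono_null (Set.diff_subset_compl _ _) hcompl
      have h1 : μ s = μ (s ∩ ({1, negOneCircle} : Set Circle)) := by
        have := measure_inter_add_diff (μ := μ) s (hms1.union hmsn)
        rw [Set.singleton_union] at this
        rw [← this, h0, add_zero]
      rw [h1]
      have h2 : s ∩ ({1, negOneCircle} : Set Circle) = (s ∩ {1}) ∪ (s ∩ {negOneCircle}) := by
        rw [← Set.inter_union_distrib_left, Set.singleton_union]
      rw [h2]
      exact measure_union
        ((Set.disjoint_singleton.mpr hne).mono Set.inter_subset_right Set.inter_subset_right)
        (hs.inter hmsn)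
    rw [hdecomp]
    by_cases h1s : (1 : Circle) ∈ s <;> by_cases hns : negOneCircle ∈ s
    · rw [Set.inter_eq_self_of_subset_right (Set.singleton_subset_iff.mpr h1s),
        Set.inter_eq_self_of_subset_right (Set.singleton_subset_iff.mpr hns)]
      simp [h1s, hns]
    · rw [Set.inter_eq_self_of_subset_right (Set.singleton_subset_iff.mpr h1s),
        Set.inter_singleton_eq_empty.mpr hns]
      simp [h1s, hns]
    · rw [Set.inter_singleton_eq_empty.mpr h1s,
        Set.inter_eq_self_of_subset_right (Set.singleton_subset_iff.mpr hns)]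
      simp [h1s, hns]
    · rw [Set.inter_singleton_eq_empty.mpr h1s, Set.inter_singleton_eq_empty.mpr hns]
      simp [h1s, hns]
  refine ⟨t, ⟨ht0, ht1⟩, hμeq, ?_⟩
  · have hic : Integrable (fun z : Circle => (z : ℂ)) (Measure.dirac (1 : Circle)) :=
      circle_coe_continuous.integrable_of_hasCompactSupport (HasCompactSupport.of_compactSpace _)
    have hicn : Integrable (fun z : Circle => (z : ℂ)) (Measure.dirac negOneCircle) :=
      circle_coe_continuous.integrable_of_hasCompactSupport (HasCompactSupport.of_compactSpace _)
    rw [hμeq, integral_add_measure (hic.smul_measure ENNReal.ofReal_ne_top)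
      (hicn.smul_measure ENNReal.ofReal_ne_top),
      integral_smul_measure, integral_smul_measure, integral_dirac, integral_dirac,
      ENNReal.toReal_ofReal ht0, ENNReal.toReal_ofReal (by linarith : (0:ℝ) ≤ 1 - t)]
    show (t : ℝ) • ((1 : Circle) : ℂ) + (1 - t : ℝ) • ((negOneCircle : Circle) : ℂ) = 2 * t - 1
    rw [Circle.coe_one]
    show (t : ℝ) • (1 : ℂ) + (1 - t : ℝ) • (-1 : ℂ) = 2 * t - 1
    simp [Complex.real_smul]
    ring
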